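/- Let τ and ν be subword patterns. Then for every n ≥ 0 and k ≥ 1, the number of k-ary words of length n avoiding the shuffle pattern τ-ℓ-ν equals the number of k-ary words of length n avoiding the shuffle pattern ν-ℓ-τ. -/

import Mathlib

/-- A word `σ : Fin n → Fin k` has an occurrence of the subword pattern `p : Fin m → Fin l`
at position `i` if `i + m ≤ n` and the corresponding letters are order-isomorphic to `p`. -/
def OccursAt {m l n k : ℕ} (p : Fin m → Fin l) (σ : Fin n → Fin k) (i : ℕ) : Prop :=
  ∃ h : i + m ≤ n, ∀ a b : Fin m,
    (σ ⟨i + a, lt_of_lt_of_le (Nat.add_lt_add_left a.isLt i) h⟩ <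
      σ ⟨i + b, lt_of_lt_of_le (Nat.add_lt_add_left b.isLt i) h⟩) ↔ p a < p b

/-- `σ` avoids the subword pattern `p`. -/
def AvoidsPat {m l n k : ℕ} (p : Fin m → Fin l) (σ : Fin n → Fin k) : Prop :=
  ∀ i : ℕ, ¬ OccursAt p σ i

/-- `σ` contains the shuffle pattern `τ-ℓ-ν`: there are an occurrence of `τ` at `i`,
a later position `pp` carrying a letter larger than all letters of the two occurrences,
and a still later occurrence of `ν` at `q`. -/
def ContainsShuffle {m₁ r₁ m₂ r₂ n k : ℕ} (τ : Fin m₁ → Fin r₁) (ν : Fin m₂ → Fin r₂)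
    (σ : Fin n → Fin k) : Prop :=
  ∃ (i pp q : ℕ) (hp : pp < n),
    i + m₁ ≤ pp ∧ pp < q ∧ q + m₂ ≤ n ∧ OccursAt τ σ i ∧ OccursAt ν σ q ∧
      ∀ (r : ℕ) (hr : r < n),
        ((i ≤ r ∧ r < i + m₁) ∨ (q ≤ r ∧ r < q + m₂)) → σ ⟨r, hr⟩ < σ ⟨pp, hp⟩


open Finset
set_option maxRecDepth 8000

namespace Stmt7Aux

/-- occurrence of pattern `p` at position `i` in `s` -/
def OccL (p s : List ℕ) (i : ℕ) : Prop :=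
  i + p.length ≤ s.length ∧ ∀ a b : ℕ, a < p.length → b < p.length →
    (s.getD (i+a) 0 < s.getD (i+b) 0 ↔ p.getD a 0 < p.getD b 0)

def ContP (p s : List ℕ) : Prop := ∃ i, OccL p s i

def OccBd (p s : List ℕ) (i t : ℕ) : Prop :=
  OccL p s i ∧ ∀ a : ℕ, a < p.length → s.getD (i+a) 0 < t

def ContBd (p : List ℕ) (t : ℕ) (s : List ℕ) : Prop := ∃ i, OccBd p s i t

def ContSh (τ ν s : List ℕ) : Prop :=
  ∃ i pp q : ℕ, i + τ.length ≤ pp ∧ pp < q ∧ q + ν.length ≤ s.length ∧ pp < s.length ∧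
    OccBd τ s i (s.getD pp 0) ∧ OccBd ν s q (s.getD pp 0)

section getD
variable {u v : List ℕ} {t j : ℕ}

lemma getD_left (h : j < u.length) : (u ++ t :: v).getD j 0 = u.getD j 0 :=
  List.getD_append _ _ _ _ h

lemma getD_mid : (u ++ t :: v).getD u.length 0 = t := by
  rw [List.getD_append_right _ _ _ _ le_rfl, Nat.sub_self]; rfl

lemma getD_right : (u ++ t :: v).getD (u.length + 1 + j) 0 = v.getD j 0 := by
  rw [List.getD_append_right _ _ _ _ (by omega)]
  have : u.length + 1 + j - u.length = j + 1 := by omega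
  rw [this]; rfl

end getD

section occ
variable {p u v s : List ℕ} {t i b : ℕ}

lemma occL_left (h : i + p.length ≤ u.length) :
    OccL p (u ++ t :: v) i ↔ OccL p u i := by
  constructor <;> rintro ⟨h1, h2⟩
  · refine ⟨h, fun a b ha hb => ?_⟩
    have := h2 a b ha hb
    rwa [getD_left (t := t) (v := v) (by omega), getD_left (t := t) (v := v) (by omega)] at this
  · refine ⟨by simp; omega, fun a b ha hb => ?_⟩
    have := h2 a b ha hb
    rw [getD_left (t := t) (v := v) (by omega), getD_left (t := t) (v := v) (by omega)]
    exact this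

lemma occL_right :
    OccL p (u ++ t :: v) (u.length + 1 + i) ↔ OccL p v i := by
  constructor <;> rintro ⟨h1, h2⟩
  · refine ⟨by simp at h1 ⊢; omega, fun a b ha hb => ?_⟩
    have := h2 a b ha hb
    rwa [(by omega : u.length + 1 + i + a = u.length + 1 + (i + a)),
      (by omega : u.length + 1 + i + b = u.length + 1 + (i + b)),
      getD_right, getD_right] at this
  · refine ⟨by simp; omega, fun a b ha hb => ?_⟩
    have := h2 a b ha hb
    rw [(by omega : u.length + 1 + i + a = u.length + 1 + (i + a)),
      (by omega : u.length + 1 + i + b = u.length + 1 + (i + b)),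
      getD_right, getD_right]
    exact this

/-- a bounded occurrence cannot straddle the separator letter `t` when the bound is `≤ t` -/
lemma occBd_split (hocc : OccBd p (u ++ t :: v) i b) (hb : b ≤ t) :
    i + p.length ≤ u.length ∨ u.length + 1 ≤ i := by
  by_contra hcon
  push_neg at hcon
  obtain ⟨h1, h2⟩ := hcon
  have hmem : i ≤ u.length ∧ u.length < i + p.length := by omega
  have := hocc.2 (u.length - i) (by omega)
  rw [(by omega : i + (u.length - i) = u.length), getD_mid] at this
  omega

lemma occBd_left (hocc : OccBd p (u ++ t :: v) i b) (h : i + p.length ≤ u.length) :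
    OccBd p u i b := by
  refine ⟨(occL_left h).1 hocc.1, fun a ha => ?_⟩
  have := hocc.2 a ha
  rwa [getD_left (by omega)] at this

lemma occBd_left' (hocc : OccBd p u i b) (hlen : i + p.length ≤ u.length) :
    OccBd p (u ++ t :: v) i b := by
  refine ⟨(occL_left hlen).2 hocc.1, fun a ha => ?_⟩
  rw [getD_left (by omega)]
  exact hocc.2 a ha

lemma occBd_right (hocc : OccBd p (u ++ t :: v) (u.length + 1 + i) b) :
    OccBd p v i b := by
  refine ⟨occL_right.1 hocc.1, fun a ha => ?_⟩
  have := hocc.2 a ha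
  rwa [(by omega : u.length + 1 + i + a = u.length + 1 + (i + a)), getD_right] at this

lemma occBd_right' (hocc : OccBd p v i b) :
    OccBd p (u ++ t :: v) (u.length + 1 + i) b := by
  refine ⟨occL_right.2 hocc.1, fun a ha => ?_⟩
  rw [(by omega : u.length + 1 + i + a = u.length + 1 + (i + a)), getD_right]
  exact hocc.2 a ha

end occ

section charac
variable {τ ν u v s : List ℕ} {t : ℕ}

lemma getD_lt_of_mem {s : List ℕ} {j t : ℕ} (hs : ∀ c ∈ s, c < t) (hj : j < s.length) :
    s.getD j 0 < t := by
  rw [List.getD_eq_getElem s 0 hj]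
  exact hs _ (List.getElem_mem hj)

lemma getD_le_of_mem {s : List ℕ} {j t : ℕ} (hs : ∀ c ∈ s, c ≤ t) (hj : j < s.length) :
    s.getD j 0 ≤ t := by
  rw [List.getD_eq_getElem s 0 hj]
  exact hs _ (List.getElem_mem hj)

lemma contP_of_contSh : ContSh τ ν s → ContP τ s := by
  rintro ⟨i, pp, q, h1, h2, h3, h4, h5, h6⟩
  exact ⟨i, h5.1⟩

lemma contBd_of_contSh (hs : ∀ c ∈ s, c ≤ t) : ContSh τ ν s → ContBd ν t s := by
  rintro ⟨i, pp, q, h1, h2, h3, h4, h5, h6⟩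
  exact ⟨q, h6.1, fun a ha => lt_of_lt_of_le (h6.2 a ha) (getD_le_of_mem hs h4)⟩

lemma contBd_iff_contP (hs : ∀ c ∈ s, c < t) : ContBd ν t s ↔ ContP ν s := by
  constructor
  · rintro ⟨i, h⟩; exact ⟨i, h.1⟩
  · rintro ⟨i, h⟩
    exact ⟨i, h, fun a ha => getD_lt_of_mem hs (by have := h.1; omega)⟩

/-- Main characterization: decomposing at a maximal letter. -/
lemma contSh_append (hu : ∀ c ∈ u, c < t) (hv : ∀ c ∈ v, c ≤ t) :
    ContSh τ ν (u ++ t :: v) ↔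
      ContSh τ ν u ∨ ContSh τ ν v ∨ (ContP τ u ∧ ContBd ν t v) := by
  have hlen : (u ++ t :: v).length = u.length + 1 + v.length := by simp; omega
  constructor
  · rintro ⟨i, pp, q, h1, h2, h3, h4, h5, h6⟩
    set m := (u ++ t :: v).getD pp 0 with hm
    have hmt : m ≤ t := by
      rcases lt_trichotomy pp u.length with h | h | h
      · rw [hm, getD_left h]; exact le_of_lt (getD_lt_of_mem hu h)
      · rw [hm, h, getD_mid]
      · rw [hm, (by omega : pp = u.length + 1 + (pp - u.length - 1)), getD_right]
        exact getD_le_of_mem hv (by rw [hlen] at h4; omega)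
    rcases occBd_split h5 hmt with hτ | hτ
    · -- τ-occurrence inside u
      rcases occBd_split h6 hmt with hν | hν
      · -- ν-occurrence also inside u : everything is inside u
        left
        have hppu : pp < u.length := by omega
        have hmu : m = u.getD pp 0 := by rw [hm, getD_left hppu]
        refine ⟨i, pp, q, h1, h2, hν, hppu, ?_, ?_⟩
        · have := occBd_left h5 hτ; rwa [hmu] at this
        · have := occBd_left h6 hν; rwa [hmu] at this
      · -- ν-occurrence inside v
        right; right
        refine ⟨⟨i, (occBd_left h5 hτ).1⟩, q - u.length - 1, ?_⟩
        have hq : q = u.length + 1 + (q - u.length - 1) := by omega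
        rw [hq] at h6
        exact ⟨(occBd_right h6).1, fun a ha =>
          lt_of_lt_of_le ((occBd_right h6).2 a ha) hmt⟩
    · -- τ-occurrence inside v ; then everything is inside v
      right; left
      have hi : i = u.length + 1 + (i - u.length - 1) := by omega
      have hppv : u.length + 1 ≤ pp := by
        have := h5.1.1; omega
      have hq : q = u.length + 1 + (q - u.length - 1) := by omega
      have hpp : pp = u.length + 1 + (pp - u.length - 1) := by omega
      have hmv : m = v.getD (pp - u.length - 1) 0 := by
        conv_lhs => rw [hm, hpp, getD_right]
      refine ⟨i - u.length - 1, pp - u.length - 1, q - u.length - 1, by omega, by omega,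
        by rw [hlen] at h3; omega, by rw [hlen] at h4; omega, ?_, ?_⟩
      · rw [hi] at h5; have := occBd_right h5; rwa [hmv] at this
      · rw [hq] at h6; have := occBd_right h6; rwa [hmv] at this
  · rintro (⟨i, pp, q, h1, h2, h3, h4, h5, h6⟩ | ⟨i, pp, q, h1, h2, h3, h4, h5, h6⟩ | h)
    · -- shuffle inside u
      refine ⟨i, pp, q, h1, h2, by rw [hlen]; omega, by rw [hlen]; omega, ?_, ?_⟩
      · rw [getD_left h4]; exact occBd_left' h5 (by omega)
      · rw [getD_left h4]; exact occBd_left' h6 (by omega)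
    · -- shuffle inside v
      refine ⟨u.length + 1 + i, u.length + 1 + pp, u.length + 1 + q, by omega, by omega,
        by rw [hlen]; omega, by rw [hlen]; omega, ?_, ?_⟩
      · rw [getD_right]; exact occBd_right' h5
      · rw [getD_right]; exact occBd_right' h6
    · -- τ in u, separator as middle letter, ν in v
      obtain ⟨⟨i, hi⟩, j, hj⟩ := h
      refine ⟨i, u.length, u.length + 1 + j, by have := hi.1; omega, by omega,
        by rw [hlen]; have := hj.1.1; omega, by rw [hlen]; omega, ?_, ?_⟩
      · rw [getD_mid]
        exact occBd_left' ⟨hi, fun a ha => getD_lt_of_mem hu (by have := hi.1; omega)⟩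
          (by have := hi.1; omega)
      · rw [getD_mid]; exact occBd_right' hj

lemma contBd_append (hu : ∀ c ∈ u, c < t) :
    ContBd ν t (u ++ t :: v) ↔ ContP ν u ∨ ContBd ν t v := by
  constructor
  · rintro ⟨i, hi⟩
    rcases occBd_split hi le_rfl with h | h
    · exact Or.inl ⟨i, (occBd_left hi h).1⟩
    · right
      rw [(by omega : i = u.length + 1 + (i - u.length - 1))] at hi
      exact ⟨i - u.length - 1, occBd_right hi⟩
  · rintro (⟨i, hi⟩ | ⟨i, hi⟩)
    · exact ⟨i, occBd_left' ⟨hi, fun a ha => getD_lt_of_mem hu (by have := hi.1; omega)⟩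
        (by have := hi.1; omega)⟩
    · exact ⟨u.length + 1 + i, occBd_right' hi⟩

end charac
section counting
open scoped Classical

def allW : ℕ → ℕ → Finset (List ℕ)
  | 0, _ => {[]}
  | n+1, K => ((Finset.range K) ×ˢ allW n K).image (fun cs => cs.1 :: cs.2)

lemma mem_allW : ∀ {n K : ℕ} {s : List ℕ}, s ∈ allW n K ↔ (s.length = n ∧ ∀ c ∈ s, c < K) := by
  intro n
  induction n with
  | zero =>
    intro K s
    simp only [allW, Finset.mem_singleton, List.length_eq_zero_iff]
    exact ⟨fun h => ⟨h, by rintro c hc; subst h; simp at hc⟩, fun h => h.1⟩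
  | succ n ih =>
    intro K s
    cases s with
    | nil => simp [allW]
    | cons c tl =>
      simp only [allW, Finset.mem_image, Finset.mem_product, Finset.mem_range, Prod.exists]
      constructor
      · rintro ⟨a, b, ⟨ha, hb⟩, heq⟩
        obtain ⟨rfl, rfl⟩ : a = c ∧ b = tl := by
          constructor <;> [exact (List.cons.injEq _ _ _ _ ▸ heq).1;
            exact (List.cons.injEq _ _ _ _ ▸ heq).2]
        obtain ⟨h1, h2⟩ := ih.1 hb
        refine ⟨by simp [h1], ?_⟩
        intro x hx
        rcases List.mem_cons.1 hx with rfl | hx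
        · exact ha
        · exact h2 x hx
      · rintro ⟨hlen, hlt⟩
        refine ⟨c, tl, ⟨hlt c (by simp), ih.2 ⟨by simpa using hlen, fun x hx => hlt x (by simp [hx])⟩⟩, rfl⟩

noncomputable def cntF (n K : ℕ) (P : List ℕ → Prop) : ℕ :=
  ((allW n K).filter P).card

/-- the boolean predicate "not equal to K" -/
private def pNe (K : ℕ) : ℕ → Bool := fun c => decide (c ≠ K)

lemma split_first {K : ℕ} {s : List ℕ} (hK : K ∈ s) :
    s = s.takeWhile (pNe K) ++ K :: (s.dropWhile (pNe K)).tail := by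
  have hd : s.dropWhile (pNe K) ≠ [] := by
    rw [Ne, List.dropWhile_eq_nil_iff]
    push_neg
    exact ⟨K, hK, by simp [pNe]⟩
  have hh := List.head_dropWhile_not (pNe K) (l := s) hd
  have hhead : (s.dropWhile (pNe K)).head hd = K := by
    simpa [pNe] using hh
  conv_lhs => rw [← List.takeWhile_append_dropWhile (p := pNe K) (l := s),
    ← List.cons_head_tail hd, hhead]

lemma takeWhile_spec {K : ℕ} {u v : List ℕ} (hu : ∀ c ∈ u, c ≠ K) :
    (u ++ K :: v).takeWhile (pNe K) = u ∧ (u ++ K :: v).dropWhile (pNe K) = K :: v := by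
  induction u with
  | nil => simp [pNe]
  | cons c tl ih =>
    have hc : pNe K c = true := by simp [pNe, hu c (by simp)]
    have := ih (fun x hx => hu x (by simp [hx]))
    simp only [List.cons_append, List.takeWhile_cons_of_pos hc, List.dropWhile_cons_of_pos hc,
      this.1, this.2, and_self]

lemma notMem_takeWhile {K : ℕ} {s : List ℕ} : ∀ c ∈ s.takeWhile (pNe K), c ≠ K := by
  intro c hc
  simpa [pNe] using List.mem_takeWhile_imp hc
lemma cnt_split (P : List ℕ → Prop) (K n : ℕ) :
    cntF n (K+1) P = cntF n K P +
      ∑ j ∈ Finset.range n, ∑ u ∈ allW j K,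
        cntF (n-1-j) (K+1) (fun v => P (u ++ K :: v)) := by
  classical
  have hsplit := Finset.card_filter_add_card_filter_not
    (s := (allW n (K+1)).filter P) (p := fun s => K ∈ s)
  rw [Finset.filter_filter, Finset.filter_filter] at hsplit
  have e1 : ((allW n (K+1)).filter (fun s => P s ∧ ¬ K ∈ s)) = (allW n K).filter P := by
    ext s
    simp only [Finset.mem_filter, mem_allW]
    constructor
    · rintro ⟨⟨h1, h2⟩, hP, hK⟩
      refine ⟨⟨h1, fun c hc => ?_⟩, hP⟩
      have := h2 c hc
      have hne : c ≠ K := fun h => hK (h ▸ hc)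
      omega
    · rintro ⟨⟨h1, h2⟩, hP⟩
      exact ⟨⟨h1, fun c hc => Nat.lt_succ_of_lt (h2 c hc)⟩, hP,
        fun hK => absurd (h2 K hK) (lt_irrefl K)⟩
  have e2 : ((allW n (K+1)).filter (fun s => P s ∧ K ∈ s)).card =
      ((Finset.range n).sigma (fun j => (allW j K).sigma
        (fun u => (allW (n-1-j) (K+1)).filter (fun v => P (u ++ K :: v))))).card := by
    apply Finset.card_bij'
      (i := fun s _ => (⟨(s.takeWhile (pNe K)).length,
        s.takeWhile (pNe K), (s.dropWhile (pNe K)).tail⟩ : Σ _ : ℕ, Σ _ : List ℕ, List ℕ))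
      (j := fun t _ => t.2.1 ++ K :: t.2.2)
    · -- hi : image in target
      rintro s hs
      rw [Finset.mem_filter] at hs
      obtain ⟨hsW, hP, hK⟩ := hs
      rw [mem_allW] at hsW
      obtain ⟨hlen, hlt⟩ := hsW
      have hdec := split_first hK
      set u := s.takeWhile (pNe K) with hudef
      set w := (s.dropWhile (pNe K)).tail with hwdef
      have hlen2 : u.length + 1 + w.length = n := by
        rw [← hlen]; conv_rhs => rw [hdec]
        simp; omega
      simp only [Finset.mem_sigma, Finset.mem_range, Finset.mem_filter, mem_allW]
      refine ⟨by omega, ⟨trivial, fun c hc => ?_⟩, ⟨by omega,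
        fun c hc => hlt c (by rw [hdec]; simp [hc])⟩, by rw [← hdec]; exact hP⟩
      have hcs : c ∈ s := by rw [hdec]; exact List.mem_append.2 (Or.inl hc)
      have := hlt c hcs
      have hne := notMem_takeWhile c hc
      omega
    · -- hj
      rintro ⟨j, u, v⟩ ht
      simp only [Finset.mem_sigma, Finset.mem_range, Finset.mem_filter, mem_allW] at ht
      obtain ⟨hj, hu, hv⟩ := ht
      rw [Finset.mem_filter, mem_allW]
      refine ⟨⟨by simp [hu.1, hv.1.1]; omega, ?_⟩, hv.2, by simp⟩
      intro c hc
      rcases List.mem_append.1 hc with h | h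
      · exact Nat.lt_succ_of_lt (hu.2 c h)
      · rcases List.mem_cons.1 h with rfl | h
        · omega
        · exact hv.1.2 c h
    · -- left inverse
      rintro s hs
      dsimp only
      rw [Finset.mem_filter] at hs
      exact (split_first hs.2.2).symm
    · -- right inverse
      rintro ⟨j, u, v⟩ ht
      simp only [Finset.mem_sigma, Finset.mem_range, Finset.mem_filter, mem_allW] at ht
      obtain ⟨hj, hu, hv⟩ := ht
      have hne : ∀ c ∈ u, c ≠ K := fun c hc => Nat.ne_of_lt (hu.2 c hc)
      have hspec := takeWhile_spec (v := v) hne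
      simp only [hspec.1, hspec.2, List.tail_cons]
      obtain ⟨hul, -⟩ := hu
      subst hul
      rfl
  rw [cntF, ← hsplit, e1, e2]
  simp only [Finset.card_sigma, cntF]
  omega
section recursions

lemma cntF_congr {n K : ℕ} {P Q : List ℕ → Prop} (h : ∀ s ∈ allW n K, (P s ↔ Q s)) :
    cntF n K P = cntF n K Q := by
  unfold cntF
  refine congrArg Finset.card ?_
  ext s
  simp only [Finset.mem_filter]
  exact and_congr_right fun hs => h s hs

lemma cntF_zero {n K : ℕ} {P : List ℕ → Prop} (h : ∀ s ∈ allW n K, ¬ P s) :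
    cntF n K P = 0 := by
  unfold cntF
  rw [Finset.card_eq_zero, Finset.eq_empty_iff_forall_notMem]
  intro s hs
  rw [Finset.mem_filter] at hs
  exact h s hs.1 hs.2

lemma sum_if {j K c : ℕ} {Q : List ℕ → Prop} [DecidablePred Q] :
    (∑ u ∈ allW j K, if Q u then c else 0) = cntF j K Q * c := by
  rw [← Finset.sum_filter, Finset.sum_const, smul_eq_mul]
  congr 1
  unfold cntF
  refine congrArg Finset.card ?_
  ext s
  simp only [Finset.mem_filter]
variable (τ ν : List ℕ) (K : ℕ)

lemma recZ (n : ℕ) :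
    cntF n (K+1) (fun s => ¬ContBd ν K s) =
      cntF n K (fun s => ¬ContP ν s) +
        ∑ j ∈ Finset.range n,
          cntF j K (fun s => ¬ContP ν s) * cntF (n-1-j) (K+1) (fun s => ¬ContBd ν K s) := by
  rw [cnt_split]
  congr 1
  · apply cntF_congr
    intro s hs
    rw [mem_allW] at hs
    rw [contBd_iff_contP hs.2]
  · apply Finset.sum_congr rfl
    intro j hj
    have step : ∀ u ∈ allW j K,
        cntF (n-1-j) (K+1) (fun v => ¬ContBd ν K (u ++ K :: v)) =
          (if ¬ContP ν u then cntF (n-1-j) (K+1) (fun s => ¬ContBd ν K s) else 0) := by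
      intro u hu
      rw [mem_allW] at hu
      by_cases hP : ContP ν u
      · rw [if_neg (by simp [hP])]
        apply cntF_zero
        intro v hv hcon
        exact hcon ((contBd_append hu.2).2 (Or.inl hP))
      · rw [if_pos (by simp [hP])]
        apply cntF_congr
        intro v hv
        rw [contBd_append hu.2]
        constructor
        · intro hnc hbd; exact hnc (Or.inr hbd)
        · rintro hnb (h | h)
          · exact hP h
          · exact hnb h
    rw [Finset.sum_congr rfl step, sum_if]

lemma recX (n : ℕ) :
    cntF n (K+1) (fun s => ¬ContSh τ ν s) =
      cntF n K (fun s => ¬ContSh τ ν s) +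
        ∑ j ∈ Finset.range n,
          (cntF j K (fun s => ¬ContP τ s) * cntF (n-1-j) (K+1) (fun s => ¬ContSh τ ν s)
           + cntF j K (fun s => ContP τ s ∧ ¬ContSh τ ν s) *
               cntF (n-1-j) (K+1) (fun s => ¬ContBd ν K s)) := by
  rw [cnt_split]
  congr 1
  apply Finset.sum_congr rfl
  intro j hj
  have step : ∀ u ∈ allW j K,
      cntF (n-1-j) (K+1) (fun v => ¬ContSh τ ν (u ++ K :: v)) =
        (if ¬ContP τ u then cntF (n-1-j) (K+1) (fun s => ¬ContSh τ ν s) else 0)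
        + (if ContP τ u ∧ ¬ContSh τ ν u then
            cntF (n-1-j) (K+1) (fun s => ¬ContBd ν K s) else 0) := by
    intro u hu
    rw [mem_allW] at hu
    have hu2 : ∀ c ∈ u, c < K := hu.2
    by_cases h1 : ContP τ u
    · by_cases h2 : ContSh τ ν u
      · rw [if_neg (by simp [h1]), if_neg (by simp [h2]), add_zero]
        apply cntF_zero
        intro v hv
        rw [mem_allW] at hv
        intro hcon
        exact hcon ((contSh_append hu2 (fun c hc => Nat.lt_succ_iff.1 (hv.2 c hc))).2
          (Or.inl h2))
      · rw [if_neg (by simp [h1]), if_pos ⟨h1, h2⟩, zero_add]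
        apply cntF_congr
        intro v hv
        rw [mem_allW] at hv
        have hv2 : ∀ c ∈ v, c ≤ K := fun c hc => Nat.lt_succ_iff.1 (hv.2 c hc)
        rw [contSh_append hu2 hv2]
        constructor
        · intro hnc hbd; exact hnc (Or.inr (Or.inr ⟨h1, hbd⟩))
        · rintro hnb (h | h | h)
          · exact h2 h
          · exact hnb (contBd_of_contSh hv2 h)
          · exact hnb h.2
    · have h2 : ¬ContSh τ ν u := fun hc => h1 (contP_of_contSh hc)
      rw [if_pos (by simp [h1]), if_neg (by simp [h1]), add_zero]
      apply cntF_congr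
      intro v hv
      rw [mem_allW] at hv
      have hv2 : ∀ c ∈ v, c ≤ K := fun c hc => Nat.lt_succ_iff.1 (hv.2 c hc)
      rw [contSh_append hu2 hv2]
      constructor
      · intro hnc hsh; exact hnc (Or.inr (Or.inl hsh))
      · rintro hns (h | h | h)
        · exact h2 h
        · exact hns h
        · exact h1 h.1
  rw [Finset.sum_congr rfl step, Finset.sum_add_distrib, sum_if, sum_if]

end recursions
section powerseries

lemma rec_to_series (f s a c g z : ℕ → ℤ)
    (h : ∀ n, f n = s n + ∑ j ∈ Finset.range n, (a j * g (n-1-j) + c j * z (n-1-j))) :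
    PowerSeries.mk f = PowerSeries.mk s +
      PowerSeries.X * (PowerSeries.mk a * PowerSeries.mk g +
        PowerSeries.mk c * PowerSeries.mk z) := by
  ext n
  cases n with
  | zero =>
    simp only [map_add, PowerSeries.coeff_mk, PowerSeries.coeff_zero_X_mul, add_zero]
    simpa using h 0
  | succ n =>
    simp only [map_add, PowerSeries.coeff_mk, PowerSeries.coeff_succ_X_mul]
    rw [h (n+1)]
    congr 1
    rw [PowerSeries.coeff_mul, PowerSeries.coeff_mul,
      Finset.Nat.sum_antidiagonal_eq_sum_range_succ_mk,
      Finset.Nat.sum_antidiagonal_eq_sum_range_succ_mk,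
      ← Finset.sum_add_distrib]
    apply Finset.sum_congr rfl
    intro j hj
    simp only [PowerSeries.coeff_mk]
    have : n + 1 - 1 - j = n - j := by omega
    rw [this]

lemma abstract_count (A B C D S X X' Z Z' : ℕ → ℤ)
    (hAC : ∀ n, A n + C n = S n) (hBD : ∀ n, B n + D n = S n)
    (hX : ∀ n, X n = S n + ∑ j ∈ Finset.range n, (A j * X (n-1-j) + C j * Z (n-1-j)))
    (hX' : ∀ n, X' n = S n + ∑ j ∈ Finset.range n, (B j * X' (n-1-j) + D j * Z' (n-1-j)))
    (hZ : ∀ n, Z n = B n + ∑ j ∈ Finset.range n, B j * Z (n-1-j))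
    (hZ' : ∀ n, Z' n = A n + ∑ j ∈ Finset.range n, A j * Z' (n-1-j)) :
    ∀ n, X n = X' n := by
  have e1 := rec_to_series X S A C X Z hX
  have e2 := rec_to_series X' S B D X' Z' hX'
  have e3 := rec_to_series Z B B (fun _ => 0) Z (fun _ => 0) (by intro n; simpa using hZ n)
  have e4 := rec_to_series Z' A A (fun _ => 0) Z' (fun _ => 0) (by intro n; simpa using hZ' n)
  have hzero : (PowerSeries.mk fun _ : ℕ => (0:ℤ)) = 0 := by
    ext n; simp
  rw [hzero] at e3 e4
  have e5 : PowerSeries.mk A + PowerSeries.mk C = PowerSeries.mk S := by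
    ext n; simp [hAC n]
  have e6 : PowerSeries.mk B + PowerSeries.mk D = PowerSeries.mk S := by
    ext n; simp [hBD n]
  have main : ((1 - PowerSeries.X * PowerSeries.mk A) * (1 - PowerSeries.X * PowerSeries.mk B))
        * PowerSeries.mk X
      = ((1 - PowerSeries.X * PowerSeries.mk A) * (1 - PowerSeries.X * PowerSeries.mk B))
        * PowerSeries.mk X' := by
    linear_combination (1 - PowerSeries.X * PowerSeries.mk B) * e1
      - (1 - PowerSeries.X * PowerSeries.mk A) * e2
      + (PowerSeries.X * PowerSeries.mk C) * e3
      - (PowerSeries.X * PowerSeries.mk D) * e4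
      + (PowerSeries.X * PowerSeries.mk B) * e5
      - (PowerSeries.X * PowerSeries.mk A) * e6
  have hunit : IsUnit ((1 - PowerSeries.X * PowerSeries.mk A)
      * (1 - PowerSeries.X * PowerSeries.mk B)) := by
    apply IsUnit.mul <;>
    · rw [PowerSeries.isUnit_iff_constantCoeff]
      simp
  have heq := hunit.mul_left_cancel main
  intro n
  have := congrArg (PowerSeries.coeff n) heq
  simpa using this

end powerseries
lemma cntF_add_split (j K : ℕ) (P Q : List ℕ → Prop) :
    cntF j K (fun s => P s ∧ Q s) + cntF j K (fun s => P s ∧ ¬ Q s) = cntF j K P := by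
  classical
  unfold cntF
  rw [← Finset.card_filter_add_card_filter_not
    (s := Finset.filter P (allW j K)) (p := Q)]
  congr 1 <;> (refine congrArg Finset.card ?_; ext s; simp only [Finset.mem_filter]; tauto)

theorem cnt_sym (τ ν : List ℕ) :
    ∀ K n, cntF n K (fun s => ¬ContSh τ ν s) = cntF n K (fun s => ¬ContSh ν τ s) := by
  intro K
  induction K with
  | zero =>
    intro n
    have h0 : ∀ (α β : List ℕ) (s : List ℕ), s ∈ allW n 0 → ¬ContSh α β s := by
      intro α β s hs hc
      rw [mem_allW] at hs
      obtain ⟨i, pp, q, h1, h2, h3, h4, h5, h6⟩ := hc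
      have := getD_lt_of_mem hs.2 h4
      omega
    rw [cntF_congr (P := fun s => ¬ContSh τ ν s) (Q := fun _ => True)
        (fun s hs => by simp [h0 τ ν s hs]),
      cntF_congr (P := fun s => ¬ContSh ν τ s) (Q := fun _ => True)
        (fun s hs => by simp [h0 ν τ s hs])]
  | succ K ih =>
    -- counts over the smaller alphabet, as integers
    set Az : ℕ → ℤ := fun j => (cntF j K (fun s => ¬ContP τ s) : ℤ) with hAz
    set Bz : ℕ → ℤ := fun j => (cntF j K (fun s => ¬ContP ν s) : ℤ) with hBz
    set Cz : ℕ → ℤ := fun j => (cntF j K (fun s => ContP τ s ∧ ¬ContSh τ ν s) : ℤ) with hCz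
    set Dz : ℕ → ℤ := fun j => (cntF j K (fun s => ContP ν s ∧ ¬ContSh ν τ s) : ℤ) with hDz
    set Sz : ℕ → ℤ := fun j => (cntF j K (fun s => ¬ContSh τ ν s) : ℤ) with hSz
    set Xz : ℕ → ℤ := fun n => (cntF n (K+1) (fun s => ¬ContSh τ ν s) : ℤ) with hXz
    set Xz' : ℕ → ℤ := fun n => (cntF n (K+1) (fun s => ¬ContSh ν τ s) : ℤ) with hXz'
    set Zz : ℕ → ℤ := fun n => (cntF n (K+1) (fun s => ¬ContBd ν K s) : ℤ) with hZz
    set Zz' : ℕ → ℤ := fun n => (cntF n (K+1) (fun s => ¬ContBd τ K s) : ℤ) with hZz'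
    have hAC : ∀ j, Az j + Cz j = Sz j := by
      intro j
      have h1 := cntF_add_split j K (fun s => ¬ContSh τ ν s) (fun s => ¬ContP τ s)
      have h2 : cntF j K (fun s => ¬ContSh τ ν s ∧ ¬¬ContP τ s) =
          cntF j K (fun s => ContP τ s ∧ ¬ContSh τ ν s) :=
        cntF_congr (fun s _ => by tauto)
      have h3 : cntF j K (fun s => ¬ContSh τ ν s ∧ ¬ContP τ s) =
          cntF j K (fun s => ¬ContP τ s) :=
        cntF_congr (fun s _ => ⟨fun h => h.2, fun h => ⟨fun hc => h (contP_of_contSh hc), h⟩⟩)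
      rw [h2, h3] at h1
      simp only [hAz, hCz, hSz]
      exact_mod_cast h1
    have hBD : ∀ j, Bz j + Dz j = Sz j := by
      intro j
      have h1 := cntF_add_split j K (fun s => ¬ContSh ν τ s) (fun s => ¬ContP ν s)
      have h2 : cntF j K (fun s => ¬ContSh ν τ s ∧ ¬¬ContP ν s) =
          cntF j K (fun s => ContP ν s ∧ ¬ContSh ν τ s) :=
        cntF_congr (fun s _ => by tauto)
      have h3 : cntF j K (fun s => ¬ContSh ν τ s ∧ ¬ContP ν s) =
          cntF j K (fun s => ¬ContP ν s) :=
        cntF_congr (fun s _ => ⟨fun h => h.2, fun h => ⟨fun hc => h (contP_of_contSh hc), h⟩⟩)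
      rw [h2, h3, ← ih j] at h1
      simp only [hBz, hDz, hSz]
      exact_mod_cast h1
    have hX : ∀ n, Xz n = Sz n + ∑ j ∈ Finset.range n,
        (Az j * Xz (n-1-j) + Cz j * Zz (n-1-j)) := by
      intro n
      have := recX τ ν K n
      simp only [hXz, hSz, hAz, hCz, hZz]
      exact_mod_cast this
    have hX' : ∀ n, Xz' n = Sz n + ∑ j ∈ Finset.range n,
        (Bz j * Xz' (n-1-j) + Dz j * Zz' (n-1-j)) := by
      intro n
      have := recX ν τ K n
      rw [← ih n] at this
      simp only [hXz', hSz, hBz, hDz, hZz']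
      exact_mod_cast this
    have hZ : ∀ n, Zz n = Bz n + ∑ j ∈ Finset.range n, Bz j * Zz (n-1-j) := by
      intro n
      have := recZ ν K n
      simp only [hZz, hBz]
      exact_mod_cast this
    have hZ' : ∀ n, Zz' n = Az n + ∑ j ∈ Finset.range n, Az j * Zz' (n-1-j) := by
      intro n
      have := recZ τ K n
      simp only [hZz', hAz]
      exact_mod_cast this
    intro n
    have := abstract_count Az Bz Cz Dz Sz Xz Xz' Zz Zz' hAC hBD hX hX' hZ hZ' n
    simp only [hXz, hXz'] at this
    exact_mod_cast this

end counting
section transfer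

lemma getD_ofFn {k n : ℕ} (σ : Fin n → Fin k) (j : ℕ) (hj : j < n) :
    (List.ofFn fun i => ((σ i : ℕ))).getD j 0 = σ ⟨j, hj⟩ := by
  rw [List.getD_eq_getElem _ _ (by simpa using hj)]
  simp

lemma occ_iff {m l n k : ℕ} (p : Fin m → Fin l) (σ : Fin n → Fin k) (i : ℕ) :
    OccursAt p σ i ↔
      OccL (List.ofFn fun a => ((p a : ℕ))) (List.ofFn fun j => ((σ j : ℕ))) i := by
  unfold OccursAt OccL
  simp only [List.length_ofFn]
  constructor
  · rintro ⟨h, hcmp⟩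
    refine ⟨h, fun a b ha hb => ?_⟩
    rw [getD_ofFn σ _ (by omega), getD_ofFn σ _ (by omega),
      getD_ofFn p _ ha, getD_ofFn p _ hb]
    have := hcmp ⟨a, ha⟩ ⟨b, hb⟩
    exact this
  · rintro ⟨h, hcmp⟩
    refine ⟨h, fun a b => ?_⟩
    have := hcmp a b a.isLt b.isLt
    rw [getD_ofFn σ _ (by omega), getD_ofFn σ _ (by omega),
      getD_ofFn p _ a.isLt, getD_ofFn p _ b.isLt] at this
    exact this

lemma contains_iff {m₁ r₁ m₂ r₂ n k : ℕ} (τ : Fin m₁ → Fin r₁) (ν : Fin m₂ → Fin r₂)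
    (σ : Fin n → Fin k) :
    ContainsShuffle τ ν σ ↔
      ContSh (List.ofFn fun a => ((τ a : ℕ))) (List.ofFn fun a => ((ν a : ℕ)))
        (List.ofFn fun j => ((σ j : ℕ))) := by
  unfold ContainsShuffle ContSh
  constructor
  · rintro ⟨i, pp, q, hp, h1, h2, h3, hτ, hν, hbig⟩
    refine ⟨i, pp, q, by simpa using h1, h2, by simpa using h3, by simpa using hp, ?_, ?_⟩
    · refine ⟨(occ_iff τ σ i).1 hτ, ?_⟩
      intro a ha
      simp only [List.length_ofFn] at ha
      rw [getD_ofFn σ _ (by omega), getD_ofFn σ _ hp]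
      have := hbig (i + a) (by omega) (Or.inl ⟨by omega, by omega⟩)
      exact this
    · refine ⟨(occ_iff ν σ q).1 hν, ?_⟩
      intro a ha
      simp only [List.length_ofFn] at ha
      rw [getD_ofFn σ _ (by omega), getD_ofFn σ _ hp]
      have := hbig (q + a) (by omega) (Or.inr ⟨by omega, by omega⟩)
      exact this
  · rintro ⟨i, pp, q, h1, h2, h3, h4, ⟨hτo, hτb⟩, ⟨hνo, hνb⟩⟩
    simp only [List.length_ofFn] at h1 h3 h4 hτb hνb
    refine ⟨i, pp, q, h4, h1, h2, h3, (occ_iff τ σ i).2 hτo, (occ_iff ν σ q).2 hνo, ?_⟩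
    intro r hr hd
    rcases hd with ⟨hle, hlt⟩ | ⟨hle, hlt⟩
    · have := hτb (r - i) (by omega)
      rw [(by omega : i + (r - i) = r), getD_ofFn σ _ hr, getD_ofFn σ _ h4] at this
      exact this
    · have := hνb (r - q) (by omega)
      rw [(by omega : q + (r - q) = r), getD_ofFn σ _ hr, getD_ofFn σ _ h4] at this
      exact this

lemma ofFn_getD {n k : ℕ} {s : List ℕ} (h1 : s.length = n) (f : Fin n → Fin k)
    (hf : ∀ j : Fin n, (f j : ℕ) = s.getD (j : ℕ) 0) :
    (List.ofFn fun j => ((f j : ℕ))) = s := by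
  apply List.ext_getElem (by simp [h1])
  intro t ht1 ht2
  simp only [List.getElem_ofFn]
  rw [hf, List.getD_eq_getElem s 0 ht2]

lemma natCard_eq (n k : ℕ) (P : (Fin n → Fin k) → Prop) (Q : List ℕ → Prop)
    (hPQ : ∀ σ : Fin n → Fin k, (P σ ↔ Q (List.ofFn fun j => ((σ j : ℕ))))) :
    Nat.card {σ : Fin n → Fin k // P σ} = cntF n k Q := by
  classical
  rw [Nat.card_eq_fintype_card, Fintype.card_subtype]
  unfold cntF
  apply Finset.card_bij'
    (i := fun σ _ => List.ofFn fun j => ((σ j : ℕ)))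
    (j := fun s hs => fun a : Fin n =>
      (⟨s.getD a 0, by
        rw [Finset.mem_filter, mem_allW] at hs
        exact getD_lt_of_mem hs.1.2 (by rw [hs.1.1]; exact a.isLt)⟩ : Fin k))
  case hi =>
    intro σ hσ
    rw [Finset.mem_filter] at hσ
    simp only [Finset.mem_filter, mem_allW]
    refine ⟨⟨by simp, ?_⟩, (hPQ σ).1 hσ.2⟩
    intro c hc
    rw [List.mem_ofFn] at hc
    obtain ⟨a, rfl⟩ := hc
    exact (σ a).isLt
  case hj =>
    intro s hs
    have hs' := hs
    rw [Finset.mem_filter, mem_allW] at hs'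
    simp only [Finset.mem_filter, Finset.mem_univ, true_and]
    refine (hPQ _).2 ?_
    rw [ofFn_getD hs'.1.1 _ (fun j => rfl)]
    exact hs'.2
  case left_inv =>
    intro σ hσ
    funext a
    apply Fin.ext
    simp only
    rw [getD_ofFn σ _ a.isLt]
  case right_inv =>
    intro s hs
    have hs' := hs
    rw [Finset.mem_filter, mem_allW] at hs'
    exact ofFn_getD hs'.1.1 _ (fun j => rfl)

end transfer

end Stmt7Aux

theorem stmt7 (m₁ r₁ m₂ r₂ : ℕ) (τ : Fin m₁ → Fin r₁) (ν : Fin m₂ → Fin r₂)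
    (n k : ℕ) (hk : 1 ≤ k) :
    Nat.card {σ : Fin n → Fin k // ¬ ContainsShuffle τ ν σ} =
      Nat.card {σ : Fin n → Fin k // ¬ ContainsShuffle ν τ σ} := by
  have h1 := Stmt7Aux.natCard_eq n k (fun σ => ¬ ContainsShuffle τ ν σ)
    (fun s => ¬ Stmt7Aux.ContSh (List.ofFn fun a => ((τ a : ℕ)))
      (List.ofFn fun a => ((ν a : ℕ))) s)
    (fun σ => not_congr (Stmt7Aux.contains_iff τ ν σ))
  have h2 := Stmt7Aux.natCard_eq n k (fun σ => ¬ ContainsShuffle ν τ σ)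
    (fun s => ¬ Stmt7Aux.ContSh (List.ofFn fun a => ((ν a : ℕ)))
      (List.ofFn fun a => ((τ a : ℕ))) s)
    (fun σ => not_congr (Stmt7Aux.contains_iff ν τ σ))
  rw [h1, h2]
  exact Stmt7Aux.cnt_sym (List.ofFn fun a => ((τ a : ℕ))) (List.ofFn fun a => ((ν a : ℕ))) k n
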